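/- Let α be a type equipped with an additive action of ℝ (written t +ᵥ L). Let B : α → M₂(ℂ) be such that for each L ∈ α the map t ↦ B(t +ᵥ L) is continuous, and let T : ℝ → α → M₂(ℂ) satisfy T(0, L) = I for all L and the differential equation (d/ds T(s, L))|ₛ₌ₜ = B(t +ᵥ L) · T(t, L) for all t ∈ ℝ and L ∈ α. Then T satisfies the cocycle property: T(t₁ + t₂, L) = T(t₁, t₂ +ᵥ L) · T(t₂, L) for all t₁, t₂ ∈ ℝ and L ∈ α. -/

import Mathlib

open Set

private lemma mulE_lip (A : Fin 2 → Fin 2 → ℂ) (C : ℝ) (hC : ‖A‖ ≤ C) :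
    LipschitzWith (2*C).toNNReal
      (fun M : Fin 2 → Fin 2 → ℂ => fun i j => ∑ k, A i k * M k j) := by
  have hC0 : 0 ≤ C := le_trans (norm_nonneg A) hC
  apply LipschitzWith.of_dist_le_mul
  intro X Y
  rw [dist_eq_norm, dist_eq_norm, Real.coe_toNNReal _ (by positivity)]
  have h1 : ((fun i j => ∑ k, A i k * X k j) - fun i j => ∑ k, A i k * Y k j)
      = fun i j => ∑ k, A i k * (X - Y) k j := by
    funext i j
    simp [Pi.sub_apply, ← Finset.sum_sub_distrib, mul_sub]
    ring
  rw [h1]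
  set D := X - Y with hD
  refine (pi_norm_le_iff_of_nonneg (by positivity)).2 fun i => ?_
  refine (pi_norm_le_iff_of_nonneg (by positivity)).2 fun j => ?_
  calc ‖∑ k, A i k * D k j‖ ≤ ∑ k, ‖A i k * D k j‖ := norm_sum_le _ _
    _ ≤ ∑ _k : Fin 2, C * ‖D‖ := by
        refine Finset.sum_le_sum fun k _ => ?_
        rw [norm_mul]
        exact mul_le_mul (le_trans (le_trans (norm_le_pi_norm _ k) (norm_le_pi_norm A i)) hC)
          (le_trans (norm_le_pi_norm _ j) (norm_le_pi_norm D k)) (norm_nonneg _) hC0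
    _ = 2*C*‖D‖ := by simp [Finset.sum_const]; ring

/-- Converse direction of Proposition 2.2: if `T(0,L) = I` and `T` satisfies the
linear ODE `(d/ds T(s,L))|_{s=t} = B(t +ᵥ L) * T(t,L)` with `t ↦ B(t +ᵥ L)`
continuous, then `T` satisfies the cocycle property. -/
theorem stmt2 {α : Type*} [AddAction ℝ α]
    (B : α → Matrix (Fin 2) (Fin 2) ℂ)
    (hBcont : ∀ (L : α) (i j : Fin 2), Continuous (fun t : ℝ => B (t +ᵥ L) i j))
    (T : ℝ → α → Matrix (Fin 2) (Fin 2) ℂ)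
    (hid : ∀ L : α, T 0 L = 1)
    (hode : ∀ (t : ℝ) (L : α) (i j : Fin 2),
      HasDerivAt (fun s : ℝ => T s L i j) ((B (t +ᵥ L) * T t L) i j) t) :
    ∀ (t₁ t₂ : ℝ) (L : α), T (t₁ + t₂) L = T t₁ (t₂ +ᵥ L) * T t₂ L := by
  intro t₁ t₂ L
  set L' : α := t₂ +ᵥ L with hL'
  set a : ℝ := min 0 t₁ - 1 with ha
  set b : ℝ := max 0 t₁ + 1 with hb
  have hab : a < b := by
    have h1 : min 0 t₁ ≤ max 0 t₁ := le_trans (min_le_left _ _) (le_max_left _ _)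
    simp only [ha, hb]; linarith
  -- clamping function
  set τ : ℝ → ℝ := fun t => max a (min b t) with hτ
  have hτ_mem : ∀ t, τ t ∈ Icc a b := fun t =>
    ⟨le_max_left _ _, max_le hab.le (min_le_left _ _)⟩
  have hτ_id : ∀ t ∈ Icc a b, τ t = t := fun t ht => by
    simp only [hτ]
    rw [min_eq_right ht.2, max_eq_right ht.1]
  -- the matrix B as a function into the pi type
  set AE : ℝ → (Fin 2 → Fin 2 → ℂ) := fun t => fun i j => B (t +ᵥ L') i j with hAE
  have hAEcont : Continuous AE := continuous_pi fun i => continuous_pi fun j => hBcont L' i j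
  obtain ⟨C, hC⟩ := (isCompact_Icc (a := a) (b := b)).exists_bound_of_continuousOn
    hAEcont.continuousOn
  have hCb : ∀ t : ℝ, ‖AE (τ t)‖ ≤ C := fun t => hC _ (hτ_mem t)
  -- the vector field
  set v : ℝ → (Fin 2 → Fin 2 → ℂ) → (Fin 2 → Fin 2 → ℂ) :=
    fun t M => fun i j => ∑ k, AE (τ t) i k * M k j with hv_def
  have hv : ∀ t, LipschitzOnWith (2*C).toNNReal (v t) univ :=
    fun t => (mulE_lip (AE (τ t)) C (hCb t)).lipschitzOnWith
  -- the two solutions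
  set f : ℝ → (Fin 2 → Fin 2 → ℂ) := fun s => fun i j => T (s + t₂) L i j with hf_def
  set g : ℝ → (Fin 2 → Fin 2 → ℂ) := fun s => fun i j => (T s L' * T t₂ L) i j with hg_def
  have hf' : ∀ t ∈ Ioo a b, HasDerivAt f (v t (f t)) t := by
    intro t ht
    rw [hasDerivAt_pi]
    intro i
    rw [hasDerivAt_pi]
    intro j
    have h2 : HasDerivAt (fun s : ℝ => T (s + t₂) L i j)
        ((B ((t + t₂) +ᵥ L) * T (t + t₂) L) i j) t := by
      exact (hode (t + t₂) L i j).comp_add_const t t₂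
    have h3 : v t (f t) i j = (B ((t + t₂) +ᵥ L) * T (t + t₂) L) i j := by
      simp only [hv_def, hf_def, hAE, Matrix.mul_apply, hτ_id t (Ioo_subset_Icc_self ht),
        hL', ← add_vadd]
    exact h3 ▸ h2
  have hg' : ∀ t ∈ Ioo a b, HasDerivAt g (v t (g t)) t := by
    intro t ht
    rw [hasDerivAt_pi]
    intro i
    rw [hasDerivAt_pi]
    intro j
    have h2 : HasDerivAt (fun s : ℝ => ∑ k, T s L' i k * T t₂ L k j)
        (∑ k, (B (t +ᵥ L') * T t L') i k * T t₂ L k j) t :=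
      HasDerivAt.fun_sum fun k _ => (hode t L' i k).mul_const _
    have hfun : (fun s : ℝ => g s i j) = fun s : ℝ => ∑ k, T s L' i k * T t₂ L k j := by
      funext s
      simp [hg_def, Matrix.mul_apply]
    have hval : v t (g t) i j = ∑ k, (B (t +ᵥ L') * T t L') i k * T t₂ L k j := by
      have : v t (g t) i j = (B (t +ᵥ L') * (T t L' * T t₂ L)) i j := by
        simp [hv_def, hg_def, hAE, Matrix.mul_apply, hτ_id t (Ioo_subset_Icc_self ht)]
      rw [this, ← mul_assoc, Matrix.mul_apply]
    rw [hfun, hval]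
    exact h2
  have hfc : ContinuousOn f (Icc a b) := by
    apply Continuous.continuousOn
    exact continuous_pi fun i => continuous_pi fun j =>
      (continuous_iff_continuousAt.2 fun t => by
        exact ((hode (t + t₂) L i j).comp_add_const t t₂).continuousAt)
  have hgc : ContinuousOn g (Icc a b) := by
    apply Continuous.continuousOn
    refine continuous_pi fun i => continuous_pi fun j => ?_
    have : (fun s : ℝ => g s i j) = fun s : ℝ => ∑ k, T s L' i k * T t₂ L k j := by
      funext s; simp [hg_def, Matrix.mul_apply]
    rw [this]
    exact continuous_finset_sum _ fun k _ =>
      ((continuous_iff_continuousAt.2 fun t => (hode t L' i k).continuousAt).mul continuous_const)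
  have ht₀ : (0:ℝ) ∈ Ioo a b := by
    constructor
    · simp only [ha]; have := min_le_left 0 t₁; linarith
    · simp only [hb]; have := le_max_left 0 t₁; linarith
  have heq0 : f 0 = g 0 := by
    funext i j
    simp [hf_def, hg_def, hid]
  have key : EqOn f g (Icc a b) :=
    ODE_solution_unique_of_mem_Icc (s := fun _ => (univ : Set (Fin 2 → Fin 2 → ℂ))) (fun t _ => hv t) ht₀
      hfc hf' (fun _ _ => trivial) hgc hg' (fun _ _ => trivial) heq0
  have ht₁ : t₁ ∈ Icc a b := by
    constructor
    · simp only [ha]; have := min_le_right 0 t₁; linarith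
    · simp only [hb]; have := le_max_right 0 t₁; linarith
  have := key ht₁
  ext i j
  exact congrFun (congrFun this i) j
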